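/- Let R ⊆ {1,…,n−1}, let σ^1,…,σ^r, τ ∈ S_n, let m ≥ 1, let 1 ≤ j ≤ n, and let S ∈ (ℕ^m)^n with reading permutation σ_R(S) = σ. Define φ_{n−j}(S) ∈ (ℕ^m)^n to be the list obtained from S by adding 1 to the first coordinate of s^{σ_l} for every l > j and leaving s^{σ_l} unchanged for l ≤ j. For S' ∈ (ℕ^m)^n write Z(S') = Z_{R,σ^r}(Z_{R,σ^{r−1}}(⋯(Z_{R,σ^1}(S'))⋯)) ∈ (ℕ^{m+r})^n. If Des_{R, Z(S)}(τ) = D, then Des_{R, Z(φ_{n−j}(S))}(τ) = D. -/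

import Mathlib

open scoped Classical

namespace RomeroComaj

noncomputable section

/-- `Seq r` is `ℕ^r`, the type of sequences of natural numbers of length `r`. -/
abbrev Seq (r : ℕ) := Fin r → ℕ

/-- strict lexicographic order on `ℕ^r`. -/
def lexLt {r : ℕ} (a b : Seq r) : Prop :=
  ∃ i : Fin r, (∀ j : Fin r, j < i → a j = b j) ∧ a i < b i

/-- weak lexicographic order on `ℕ^r`. -/
def lexLe {r : ℕ} (a b : Seq r) : Prop :=
  lexLt a b ∨ a = b

/-- `RNbr R a b` : the (1-indexed) indices `a` and `b` are `R`-neighbors,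
i.e. (for `a < b`) all of `a, a+1, …, b-1` lie in `R`. -/
def RNbr (R : Finset ℕ) (a b : ℕ) : Prop :=
  ∀ t ∈ Finset.Ico (min a b) (max a b), t ∈ R

/-- the value `σ_i` of the one-line notation of `σ`, both position `i` and
the value being 1-indexed (junk value `0` outside `1 ≤ i ≤ n`). -/
def pget {n : ℕ} (σ : Equiv.Perm (Fin n)) (i : ℕ) : ℕ :=
  if h : i - 1 < n then (σ ⟨i - 1, h⟩).val + 1 else 0

/-- the sequence `s^i` of a list `S = (s^1, …, s^n)`, `i` being 1-indexed. -/
def sget {n r : ℕ} (S : Fin n → Seq r) (i : ℕ) : Seq r :=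
  if h : i - 1 < n then S ⟨i - 1, h⟩ else 0

/-- the condition for `i` to belong to `Des_{R,S}(σ)`:
`s^{σ_i} > s^{σ_{i+1}} − χ(σ_{i+1} < σ_i ∧ σ_{i+1} ≁_R σ_i) − χ(σ_{i+1} > σ_i ∧ σ_i ∼_R σ_{i+1})`. -/
def desCond {n r : ℕ} (R : Finset ℕ) (S : Fin n → Seq r) (σ : Equiv.Perm (Fin n)) (i : ℕ) :
    Prop :=
  if (pget σ (i+1) < pget σ i ∧ ¬ RNbr R (pget σ (i+1)) (pget σ i)) ∨
      (pget σ i < pget σ (i+1) ∧ RNbr R (pget σ i) (pget σ (i+1)))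
  then lexLe (sget S (pget σ (i+1))) (sget S (pget σ i))
  else lexLt (sget S (pget σ (i+1))) (sget S (pget σ i))

/-- `Des_{R,S}(σ) ⊆ {1, …, n−1}` (1-indexed positions). -/
def DesSet {n r : ℕ} (R : Finset ℕ) (S : Fin n → Seq r) (σ : Equiv.Perm (Fin n)) : Finset ℕ :=
  (Finset.Icc 1 (n-1)).filter (fun i => desCond R S σ i)

/-- `Comaj_{R,S}(σ) = ∑_{i ∈ Des_{R,S}(σ)} (n − i)`. -/
def Comaj {n r : ℕ} (R : Finset ℕ) (S : Fin n → Seq r) (σ : Equiv.Perm (Fin n)) : ℕ :=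
  ∑ i ∈ DesSet R S σ, (n - i)

/-- `s^i` is read before `s^j` in the reading order of `S` (with respect to `R`);
`i, j` are 1-indexed. -/
def readBefore {n r : ℕ} (R : Finset ℕ) (S : Fin n → Seq r) (i j : ℕ) : Prop :=
  lexLt (sget S i) (sget S j) ∨
    (sget S i = sget S j ∧ ((i < j ∧ ¬ RNbr R i j) ∨ (j < i ∧ RNbr R j i)))

/-- `IsReading R S σ` says that the reading permutation `σ_R(S)` equals `σ`,
i.e. `σ` lists `1, …, n` in the reading order of `S`. -/
def IsReading {n r : ℕ} (R : Finset ℕ) (S : Fin n → Seq r) (σ : Equiv.Perm (Fin n)) : Prop :=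
  ∀ i ∈ Finset.Icc 1 (n-1), readBefore R S (pget σ i) (pget σ (i+1))

/-- the operator `Z_{R,σ} : (ℕ^r)^n → (ℕ^{r+1})^n`, prepending to `s^v` the number of
descents of `σ` (w.r.t. `R, S`) at positions strictly before the position of `v` in `σ`. -/
def Zop {n r : ℕ} (R : Finset ℕ) (σ : Equiv.Perm (Fin n)) (S : Fin n → Seq r) :
    Fin n → Seq (r+1) :=
  fun v => Fin.cons ((DesSet R S σ ∩ Finset.Ico 1 ((σ.symm v).val + 1)).card) (S v)

/-- `Zvec R σs i = Z_{R,σ^i} ⋯ Z_{R,σ^1}(∅)` where `σ^{j+1} = σs j`. -/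
def Zvec {n : ℕ} (R : Finset ℕ) (σs : ℕ → Equiv.Perm (Fin n)) : (i : ℕ) → Fin n → Seq i
  | 0 => fun _ => (0 : Seq 0)
  | (i+1) => Zop R (σs i) (Zvec R σs i)

/-- extend a finite vector of permutations to `ℕ`, by the identity. -/
def extFun {n r : ℕ} (σv : Fin r → Equiv.Perm (Fin n)) : ℕ → Equiv.Perm (Fin n) :=
  fun j => if h : j < r then σv ⟨j, h⟩ else 1

/-- `comajI R k σv i = comaj^i_R(σ⃗)` for `1 ≤ i ≤ k`, where `σ⃗ = σv` has length `k−1`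
and `σ^k = ε`. -/
def comajI {n : ℕ} (R : Finset ℕ) (k : ℕ) (σv : Fin (k-1) → Equiv.Perm (Fin n)) (i : ℕ) : ℕ :=
  Comaj R (Zvec R (extFun σv) (i-1)) (extFun σv (i-1))

/-- the exponent of the monomial `q^S` for `S ∈ (ℕ^r)^n` : the (0-indexed) variable `i`
(that is, `q_{i+1}`) records the `(r−i)`-th (0-indexed: `r−1−i`-th) coordinates. -/
def expOf {n r : ℕ} (S : Fin n → Seq r) : Fin r →₀ ℕ :=
  Finsupp.equivFunOnFinite.symm (fun i => ∑ j : Fin n, S j (Fin.rev i))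

/-- the formal power series whose coefficient at a monomial `d` counts the elements
`a : α` satisfying `P a d`. -/
def countSeriesP {σty α : Type*} (P : α → (σty →₀ ℕ) → Prop) : MvPowerSeries σty ℤ :=
  fun d => (Nat.card {a : α // P a d} : ℤ)

/-- `∑_{S ∈ (ℕ^r)^n, P S} q^S`. -/
def countSeries {n r : ℕ} (P : (Fin n → Seq r) → Prop) : MvPowerSeries (Fin r) ℤ :=
  countSeriesP (fun S d => P S ∧ expOf S = d)

/-- the Pochhammer factor `(q_i; q_i)_n = ∏_{j=1}^n (1 − q_i^j)`. -/
def pochOne {r : ℕ} (n : ℕ) (i : Fin r) : MvPowerSeries (Fin r) ℤ :=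
  ∏ j ∈ Finset.Icc 1 n, (1 - (MvPowerSeries.X i : MvPowerSeries (Fin r) ℤ) ^ j)

/-- `∏_{i=1}^{r} (q_i; q_i)_n`. -/
def pochAll (n r : ℕ) : MvPowerSeries (Fin r) ℤ :=
  ∏ i : Fin r, pochOne n i

/-- the exponent of `q_1^{comaj¹_R(σ⃗)} ⋯ q_k^{comaj^k_R(σ⃗)}`. -/
def comajExp {n : ℕ} (R : Finset ℕ) (k : ℕ) (σv : Fin (k-1) → Equiv.Perm (Fin n)) :
    Fin k →₀ ℕ :=
  Finsupp.equivFunOnFinite.symm (fun i => comajI R k σv (i.val + 1))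

/-- A standard Young tableau of shape `μ` (with `μ.card` cells), recorded by the
position `pos i` of each (1-indexed) entry `i ∈ {1, …, μ.card}`; entries increase
left-to-right along rows and down columns (matrix convention), and `pos` is a
bijection from `{1, …, μ.card}` onto the cells of `μ` (normalized by `0` outside). -/
structure SYT (μ : YoungDiagram) where
  pos : ℕ → ℕ × ℕ
  mem : ∀ i ∈ Finset.Icc 1 μ.card, pos i ∈ μ
  inj : ∀ i ∈ Finset.Icc 1 μ.card, ∀ j ∈ Finset.Icc 1 μ.card, pos i = pos j → i = j
  surj : ∀ c ∈ μ, ∃ i ∈ Finset.Icc 1 μ.card, pos i = c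
  row_inc : ∀ i ∈ Finset.Icc 1 μ.card, ∀ j ∈ Finset.Icc 1 μ.card,
    (pos i).1 = (pos j).1 → (pos i).2 < (pos j).2 → i < j
  col_inc : ∀ i ∈ Finset.Icc 1 μ.card, ∀ j ∈ Finset.Icc 1 μ.card,
    (pos i).2 = (pos j).2 → (pos i).1 < (pos j).1 → i < j
  junk : ∀ i, i ∉ Finset.Icc 1 μ.card → pos i = 0

/-- `des(T)` : the set of `i ∈ {1, …, n−1}` such that `i+1` lies in a strictly
higher row of `T` than `i` (in matrix convention: a strictly larger row index). -/
def desSYT {μ : YoungDiagram} (T : SYT μ) : Finset ℕ :=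
  (Finset.Icc 1 (μ.card - 1)).filter (fun i => (T.pos i).1 < (T.pos (i+1)).1)

/-- the ordinary descent set `des(π) = {i : π_i > π_{i+1}}` (1-indexed). -/
def desPerm {n : ℕ} (π : Equiv.Perm (Fin n)) : Finset ℕ :=
  (Finset.Icc 1 (n-1)).filter (fun i => pget π (i+1) < pget π i)

/-- `comaj(π) = ∑_{i ∈ des(π)} (n − i)`. -/
def comajP {n : ℕ} (π : Equiv.Perm (Fin n)) : ℕ :=
  ∑ i ∈ desPerm π, (n - i)


/-- `φ_{n−j}` : add `1` to the first coordinate of `s^{σ_l}` for every `l > j`. -/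
def phiMap {n m : ℕ} (σ : Equiv.Perm (Fin n)) (j : ℕ) (S : Fin n → Seq m) :
    Fin n → Seq m :=
  fun v c => S v c + if c.val = 0 ∧ j < (σ.symm v).val + 1 then 1 else 0

/-- `Zchain R σs r S = Z_{R,σ^r}(⋯(Z_{R,σ^1}(S))⋯)` where `σ^{i+1} = σs i`. -/
def Zchain {n m : ℕ} (R : Finset ℕ) (σs : ℕ → Equiv.Perm (Fin n)) :
    (r : ℕ) → (Fin n → Seq m) → Fin n → Seq (m + r)
  | 0, S => S
  | (r+1), S => Zop R (σs r) (Zchain R σs r S)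
section Aux

private lemma lexLt_irrefl {r : ℕ} (a : Seq r) : ¬ lexLt a a := by
  rintro ⟨i, -, h⟩; exact lt_irrefl _ h

private lemma lexLt_trans {r : ℕ} {a b c : Seq r} (h1 : lexLt a b) (h2 : lexLt b c) :
    lexLt a c := by
  obtain ⟨i, hi, hlt⟩ := h1
  obtain ⟨k, hk, hlt'⟩ := h2
  rcases lt_trichotomy i k with h | h | h
  · exact ⟨i, fun j hj => (hi j hj).trans (hk j (hj.trans h)), by rw [← hk i h]; exact hlt⟩
  · subst h; exact ⟨i, fun j hj => (hi j hj).trans (hk j hj), hlt.trans hlt'⟩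
  · exact ⟨k, fun j hj => (hi j (hj.trans h)).trans (hk j hj), by rw [hi k h]; exact hlt'⟩

private lemma lexLe_first {r : ℕ} (hr : 0 < r) {a b : Seq r} (h : lexLe a b) :
    a ⟨0, hr⟩ ≤ b ⟨0, hr⟩ := by
  rcases h with ⟨i, hi, hlt⟩ | rfl
  · rcases Nat.eq_zero_or_pos i.val with h0 | h0
    · have he : i = ⟨0, hr⟩ := Fin.ext h0
      subst he; exact le_of_lt hlt
    · exact le_of_eq (hi ⟨0, hr⟩ (by simpa [Fin.lt_def] using h0))
  · exact le_rfl

private lemma lexLt_shift {r : ℕ} (t : ℕ) {a b : Seq r} :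
    lexLt (fun c => a c + if c.val = 0 then t else 0)
      (fun c => b c + if c.val = 0 then t else 0) ↔ lexLt a b := by
  constructor <;> rintro ⟨i, hp, hlt⟩ <;> refine ⟨i, fun j hj => ?_, ?_⟩
  · have := hp j hj; dsimp at this; omega
  · dsimp at hlt; omega
  · have := hp j hj; dsimp; omega
  · dsimp; omega

private lemma eq_shift {r : ℕ} (t : ℕ) {a b : Seq r} :
    ((fun c => a c + if c.val = 0 then t else 0) =
      fun c => b c + if c.val = 0 then t else 0) ↔ a = b := by
  constructor
  · intro h; funext c
    have h' : a c + (if c.val = 0 then t else 0) = b c + (if c.val = 0 then t else 0) :=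
      congrFun h c
    omega
  · rintro rfl; rfl

private lemma lexLt_add_e {r : ℕ} (hr : 0 < r) {a b : Seq r} (h : lexLe a b) :
    lexLt a (fun c => b c + if c.val = 0 then 1 else 0) := by
  refine ⟨⟨0, hr⟩, fun k hk => absurd hk (by simp [Fin.lt_def]), ?_⟩
  have := lexLe_first hr h
  show _ < _ + (if (0:ℕ) = 0 then 1 else 0)
  rw [if_pos rfl]
  omega

private lemma rnbr_iff {R : Finset ℕ} {a b : ℕ} (hab : a ≤ b) :
    RNbr R a b ↔ ∀ t, a ≤ t → t < b → t ∈ R := by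
  unfold RNbr
  simp [Finset.mem_Ico, min_eq_left hab, max_eq_right hab]

private lemma rnbr_of_subinterval {R : Finset ℕ} {a b c d : ℕ} (h1 : a ≤ c) (h2 : d ≤ b)
    (h3 : c ≤ d) (hab : a ≤ b) (H : RNbr R a b) : RNbr R c d := by
  rw [rnbr_iff hab] at H
  rw [rnbr_iff h3]
  intro t h4 h5
  exact H t (by omega) (by omega)

private lemma rnbr_union {R : Finset ℕ} {a b c : ℕ} (h1 : a ≤ b) (h2 : b ≤ c)
    (H1 : RNbr R a b) (H2 : RNbr R b c) : RNbr R a c := by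
  rw [rnbr_iff h1] at H1
  rw [rnbr_iff h2] at H2
  rw [rnbr_iff (h1.trans h2)]
  intro t ht1 ht2
  rcases lt_or_ge t b with h | h
  · exact H1 t ht1 h
  · exact H2 t h ht2

private lemma tb_asymm {R : Finset ℕ} {u v : ℕ}
    (h1 : (u < v ∧ ¬ RNbr R u v) ∨ (v < u ∧ RNbr R v u))
    (h2 : (v < u ∧ ¬ RNbr R v u) ∨ (u < v ∧ RNbr R u v)) : False := by
  rcases h1 with ⟨h1l, h1n⟩ | ⟨h1l, h1n⟩ <;> rcases h2 with ⟨h2l, h2n⟩ | ⟨h2l, h2n⟩ <;>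
    first | omega | exact h1n h2n | exact h2n h1n

private lemma tb_trans {R : Finset ℕ} {u v w : ℕ} (hne : u ≠ w)
    (h1 : (u < v ∧ ¬ RNbr R u v) ∨ (v < u ∧ RNbr R v u))
    (h2 : (v < w ∧ ¬ RNbr R v w) ∨ (w < v ∧ RNbr R w v)) :
    (u < w ∧ ¬ RNbr R u w) ∨ (w < u ∧ RNbr R w u) := by
  rcases h1 with ⟨h1l, h1n⟩ | ⟨h1l, h1n⟩ <;> rcases h2 with ⟨h2l, h2n⟩ | ⟨h2l, h2n⟩
  · exact Or.inl ⟨by omega,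
      fun H => h1n (rnbr_of_subinterval (le_refl u) (by omega) (by omega) (by omega) H)⟩
  · rcases lt_or_gt_of_ne hne with h | h
    · exact Or.inl ⟨h, fun H => h1n (rnbr_union (by omega) (by omega) H h2n)⟩
    · exact Or.inr ⟨h, rnbr_of_subinterval (le_refl w) (by omega) (by omega) (by omega) h2n⟩
  · rcases lt_or_gt_of_ne hne with h | h
    · exact Or.inl ⟨h, fun H => h2n (rnbr_union (by omega) (by omega) h1n H)⟩
    · exact Or.inr ⟨h, rnbr_of_subinterval (by omega) (le_refl u) (by omega) (by omega) h1n⟩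
  · exact Or.inr ⟨by omega, rnbr_union (by omega) (by omega) h2n h1n⟩

private lemma readBefore_asymm {n r : ℕ} {R : Finset ℕ} {S : Fin n → Seq r} {u v : ℕ}
    (h1 : readBefore R S u v) (h2 : readBefore R S v u) : False := by
  unfold readBefore at h1 h2
  rcases h1 with h1 | ⟨he1, ht1⟩ <;> rcases h2 with h2 | ⟨he2, ht2⟩
  · exact lexLt_irrefl _ (lexLt_trans h1 h2)
  · rw [he2] at h1; exact lexLt_irrefl _ h1
  · rw [he1] at h2; exact lexLt_irrefl _ h2
  · exact tb_asymm ht1 ht2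

private lemma readBefore_trans {n r : ℕ} {R : Finset ℕ} {S : Fin n → Seq r} {u v w : ℕ}
    (h1 : readBefore R S u v) (h2 : readBefore R S v w) : readBefore R S u w := by
  by_cases huw : u = w
  · subst huw; exact (readBefore_asymm h1 h2).elim
  · unfold readBefore at h1 h2 ⊢
    rcases h1 with h1 | ⟨he1, ht1⟩ <;> rcases h2 with h2 | ⟨he2, ht2⟩
    · exact Or.inl (lexLt_trans h1 h2)
    · exact Or.inl (by rw [← he2]; exact h1)
    · exact Or.inl (by rw [he1]; exact h2)
    · exact Or.inr ⟨he1.trans he2, tb_trans huw ht1 ht2⟩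

private lemma readBefore_lexLe {n r : ℕ} {R : Finset ℕ} {S : Fin n → Seq r} {u v : ℕ}
    (h : readBefore R S u v) : lexLe (sget S u) (sget S v) := by
  unfold readBefore at h
  rcases h with h | ⟨h, -⟩
  · exact Or.inl h
  · exact Or.inr h

private lemma pget_eval {n : ℕ} (σ : Equiv.Perm (Fin n)) (p : ℕ) (h : p < n) :
    pget σ (p+1) = (σ ⟨p, h⟩).val + 1 :=
  dif_pos h

private lemma pget_symm {n : ℕ} (σ : Equiv.Perm (Fin n)) (a : Fin n) :
    pget σ ((σ.symm a).val + 1) = a.val + 1 := by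
  rw [pget_eval σ _ (σ.symm a).isLt]
  have h : (⟨(σ.symm a).val, (σ.symm a).isLt⟩ : Fin n) = σ.symm a := rfl
  rw [h, Equiv.apply_symm_apply]

private lemma pget_mem {n : ℕ} (τ : Equiv.Perm (Fin n)) {i : ℕ} (h : i - 1 < n) :
    pget τ i ∈ Finset.Icc 1 n := by
  unfold pget
  rw [dif_pos h]
  have := (τ ⟨i-1, h⟩).isLt
  rw [Finset.mem_Icc]
  omega

private lemma isReading_chain {n m : ℕ} {R : Finset ℕ} {S : Fin n → Seq m}
    {σ : Equiv.Perm (Fin n)} (hS : IsReading R S σ) :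
    ∀ q, q < n → ∀ p, p < q → readBefore R S (pget σ (p+1)) (pget σ (q+1)) := by
  intro q
  induction q with
  | zero => intro _ p hp; omega
  | succ q ih =>
    intro hq p hp
    have hstep : readBefore R S (pget σ (q+1)) (pget σ (q+1+1)) :=
      hS (q+1) (Finset.mem_Icc.mpr ⟨by omega, by omega⟩)
    rcases Nat.lt_succ_iff_lt_or_eq.mp hp with h | rfl
    · exact readBefore_trans (ih (by omega) p h) hstep
    · exact hstep

private lemma desCond_iff_readBefore {n r : ℕ} (R : Finset ℕ) (S : Fin n → Seq r)
    (τ : Equiv.Perm (Fin n)) (i : ℕ) :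
    desCond R S τ i ↔ readBefore R S (pget τ (i+1)) (pget τ i) := by
  unfold desCond readBefore lexLe
  by_cases h : (pget τ (i+1) < pget τ i ∧ ¬ RNbr R (pget τ (i+1)) (pget τ i)) ∨
      (pget τ i < pget τ (i+1) ∧ RNbr R (pget τ i) (pget τ (i+1)))
  · rw [if_pos h]; tauto
  · rw [if_neg h]; tauto

private lemma desSet_congr {n r : ℕ} {R : Finset ℕ} {S S' : Fin n → Seq r}
    (h : ∀ u ∈ Finset.Icc 1 n, ∀ v ∈ Finset.Icc 1 n, readBefore R S' u v ↔ readBefore R S u v)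
    (τ : Equiv.Perm (Fin n)) : DesSet R S' τ = DesSet R S τ := by
  unfold DesSet
  ext i
  simp only [Finset.mem_filter, Finset.mem_Icc]
  refine and_congr_right fun hi => ?_
  have hi1 : i - 1 < n := by omega
  have hi2 : (i+1) - 1 < n := by omega
  rw [desCond_iff_readBefore, desCond_iff_readBefore]
  exact h _ (pget_mem τ hi2) _ (pget_mem τ hi1)

private lemma lexLt_cons {r : ℕ} (c d : ℕ) (x y : Seq r) :
    lexLt (Fin.cons c x) (Fin.cons d y) ↔ c < d ∨ (c = d ∧ lexLt x y) := by
  constructor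
  · rintro ⟨i, hi, hlt⟩
    rcases Fin.eq_zero_or_eq_succ i with rfl | ⟨k, rfl⟩
    · left; simpa using hlt
    · right
      refine ⟨by simpa using hi 0 (Fin.succ_pos k), k, fun j hj => ?_, by simpa using hlt⟩
      have := hi j.succ (by simpa [Fin.succ_lt_succ_iff] using hj)
      simpa using this
  · rintro (h | ⟨rfl, k, hk, hlt⟩)
    · exact ⟨0, fun j hj => absurd hj (by simp), by simpa using h⟩
    · refine ⟨k.succ, fun j hj => ?_, by simpa using hlt⟩
      induction j using Fin.cases with
      | zero => simp
      | succ j' =>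
        have : j' < k := by simpa [Fin.succ_lt_succ_iff] using hj
        simpa using hk j' this

private lemma readBefore_zop {n r : ℕ} (R : Finset ℕ) (τ' : Equiv.Perm (Fin n))
    (S : Fin n → Seq r) {u v : ℕ} (hu1 : u - 1 < n) (hv1 : v - 1 < n) :
    readBefore R (Zop R τ' S) u v ↔
      ((DesSet R S τ' ∩ Finset.Ico 1 ((τ'.symm ⟨u-1, hu1⟩).val + 1)).card <
        (DesSet R S τ' ∩ Finset.Ico 1 ((τ'.symm ⟨v-1, hv1⟩).val + 1)).card ∨
       ((DesSet R S τ' ∩ Finset.Ico 1 ((τ'.symm ⟨u-1, hu1⟩).val + 1)).card =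
        (DesSet R S τ' ∩ Finset.Ico 1 ((τ'.symm ⟨v-1, hv1⟩).val + 1)).card ∧
        readBefore R S u v)) := by
  have h1 : sget (Zop R τ' S) u =
      Fin.cons ((DesSet R S τ' ∩ Finset.Ico 1 ((τ'.symm ⟨u-1, hu1⟩).val + 1)).card)
        (S ⟨u-1, hu1⟩) := dif_pos hu1
  have h2 : sget (Zop R τ' S) v =
      Fin.cons ((DesSet R S τ' ∩ Finset.Ico 1 ((τ'.symm ⟨v-1, hv1⟩).val + 1)).card)
        (S ⟨v-1, hv1⟩) := dif_pos hv1
  have h3 : sget S u = S ⟨u-1, hu1⟩ := dif_pos hu1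
  have h4 : sget S v = S ⟨v-1, hv1⟩ := dif_pos hv1
  unfold readBefore
  rw [h1, h2, h3, h4, lexLt_cons, Fin.cons_inj]
  tauto

private lemma zop_readBefore_congr {n r : ℕ} {R : Finset ℕ} {S S' : Fin n → Seq r}
    (h : ∀ u ∈ Finset.Icc 1 n, ∀ v ∈ Finset.Icc 1 n, readBefore R S' u v ↔ readBefore R S u v)
    (τ' : Equiv.Perm (Fin n)) :
    ∀ u ∈ Finset.Icc 1 n, ∀ v ∈ Finset.Icc 1 n,
      readBefore R (Zop R τ' S') u v ↔ readBefore R (Zop R τ' S) u v := by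
  intro u hu v hv
  have hu' := Finset.mem_Icc.mp hu
  have hv' := Finset.mem_Icc.mp hv
  have hu1 : u - 1 < n := by omega
  have hv1 : v - 1 < n := by omega
  rw [readBefore_zop R τ' S' hu1 hv1, readBefore_zop R τ' S hu1 hv1,
    desSet_congr h τ', h u hu v hv]

private lemma phi_readBefore {n m : ℕ} (hm : 1 ≤ m) {R : Finset ℕ} {σ : Equiv.Perm (Fin n)}
    (j : ℕ) {S : Fin n → Seq m} (hS : IsReading R S σ) :
    ∀ u ∈ Finset.Icc 1 n, ∀ v ∈ Finset.Icc 1 n,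
      readBefore R (phiMap σ j S) u v ↔ readBefore R S u v := by
  intro u hu v hv
  rw [Finset.mem_Icc] at hu hv
  have hu1 : u - 1 < n := by omega
  have hv1 : v - 1 < n := by omega
  have hsu : sget S u = S ⟨u-1, hu1⟩ := dif_pos hu1
  have hsv : sget S v = S ⟨v-1, hv1⟩ := dif_pos hv1
  have hpu : sget (phiMap σ j S) u = phiMap σ j S ⟨u-1, hu1⟩ := dif_pos hu1
  have hpv : sget (phiMap σ j S) v = phiMap σ j S ⟨v-1, hv1⟩ := dif_pos hv1
  by_cases hju : j < (σ.symm ⟨u-1, hu1⟩).val + 1 <;>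
    by_cases hjv : j < (σ.symm ⟨v-1, hv1⟩).val + 1
  · -- both shifted
    have e1 : phiMap σ j S ⟨u-1, hu1⟩ =
        fun c => S ⟨u-1, hu1⟩ c + if c.val = 0 then 1 else 0 :=
      funext fun c => by simp [phiMap, hju]
    have e2 : phiMap σ j S ⟨v-1, hv1⟩ =
        fun c => S ⟨v-1, hv1⟩ c + if c.val = 0 then 1 else 0 :=
      funext fun c => by simp [phiMap, hjv]
    unfold readBefore
    rw [hpu, hpv, hsu, hsv, e1, e2, lexLt_shift, eq_shift]
  · -- u shifted, v not : pv ≤ j < pu : both sides False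
    have e1 : phiMap σ j S ⟨u-1, hu1⟩ =
        fun c => S ⟨u-1, hu1⟩ c + if c.val = 0 then 1 else 0 :=
      funext fun c => by simp [phiMap, hju]
    have e2 : phiMap σ j S ⟨v-1, hv1⟩ = S ⟨v-1, hv1⟩ :=
      funext fun c => by simp [phiMap, hjv]
    have hvu : readBefore R S v u := by
      have hlt : (σ.symm ⟨v-1, hv1⟩).val < (σ.symm ⟨u-1, hu1⟩).val := by omega
      have h0 := isReading_chain hS (σ.symm ⟨u-1, hu1⟩).val (σ.symm ⟨u-1, hu1⟩).isLt _ hlt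
      rw [pget_symm, pget_symm] at h0
      rwa [show ((⟨v-1, hv1⟩ : Fin n) : ℕ) + 1 = v from by simp; omega,
        show ((⟨u-1, hu1⟩ : Fin n) : ℕ) + 1 = u from by simp; omega] at h0
    have hle : lexLe (S ⟨v-1, hv1⟩) (S ⟨u-1, hu1⟩) := by
      have := readBefore_lexLe hvu
      rwa [hsu, hsv] at this
    have h0 : S ⟨v-1, hv1⟩ ⟨0, hm⟩ ≤ S ⟨u-1, hu1⟩ ⟨0, hm⟩ := lexLe_first hm hle
    constructor
    · intro h
      exfalso
      have hle' := readBefore_lexLe h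
      rw [hpu, hpv, e1, e2] at hle'
      have := lexLe_first hm hle'
      dsimp at this
      omega
    · intro h
      exact (readBefore_asymm h hvu).elim
  · -- v shifted, u not : pu ≤ j < pv : both sides True
    have e1 : phiMap σ j S ⟨u-1, hu1⟩ = S ⟨u-1, hu1⟩ :=
      funext fun c => by simp [phiMap, hju]
    have e2 : phiMap σ j S ⟨v-1, hv1⟩ =
        fun c => S ⟨v-1, hv1⟩ c + if c.val = 0 then 1 else 0 :=
      funext fun c => by simp [phiMap, hjv]
    have huv : readBefore R S u v := by
      have hlt : (σ.symm ⟨u-1, hu1⟩).val < (σ.symm ⟨v-1, hv1⟩).val := by omega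
      have h0 := isReading_chain hS (σ.symm ⟨v-1, hv1⟩).val (σ.symm ⟨v-1, hv1⟩).isLt _ hlt
      rw [pget_symm, pget_symm] at h0
      rwa [show ((⟨v-1, hv1⟩ : Fin n) : ℕ) + 1 = v from by simp; omega,
        show ((⟨u-1, hu1⟩ : Fin n) : ℕ) + 1 = u from by simp; omega] at h0
    constructor
    · intro _; exact huv
    · intro _
      refine Or.inl ?_
      rw [hpu, hpv, e1, e2]
      apply lexLt_add_e hm
      have := readBefore_lexLe huv
      rwa [hsu, hsv] at this
  · -- neither shifted
    have e1 : phiMap σ j S ⟨u-1, hu1⟩ = S ⟨u-1, hu1⟩ :=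
      funext fun c => by simp [phiMap, hju]
    have e2 : phiMap σ j S ⟨v-1, hv1⟩ = S ⟨v-1, hv1⟩ :=
      funext fun c => by simp [phiMap, hjv]
    unfold readBefore
    rw [hpu, hpv, hsu, hsv, e1, e2]

end Aux

/-- **Lemma.**  The injections `φ_{n−j}` preserve the descent sets computed after
applying the chain of `Z`-operators: if `σ_R(S) = σ` and
`Des_{R, Z_{R,σ^r} ⋯ Z_{R,σ^1}(S)}(τ) = D`, then
`Des_{R, Z_{R,σ^r} ⋯ Z_{R,σ^1}(φ_{n−j}(S))}(τ) = D`. -/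
theorem phi_preserves_descents (n m r : ℕ) (hn : 1 ≤ n) (hm : 1 ≤ m)
    (R : Finset ℕ) (hR : R ⊆ Finset.Icc 1 (n-1))
    (σv : Fin r → Equiv.Perm (Fin n)) (τ σ : Equiv.Perm (Fin n))
    (j : ℕ) (hj1 : 1 ≤ j) (hj2 : j ≤ n)
    (S : Fin n → Seq m) (hS : IsReading R S σ) (D : Finset ℕ)
    (hD : DesSet R (Zchain R (extFun σv) r S) τ = D) :
    DesSet R (Zchain R (extFun σv) r (phiMap σ j S)) τ = D := by
  subst hD
  have base := phi_readBefore hm j hS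
  have main : ∀ k, ∀ u ∈ Finset.Icc 1 n, ∀ v ∈ Finset.Icc 1 n,
      readBefore R (Zchain R (extFun σv) k (phiMap σ j S)) u v ↔
        readBefore R (Zchain R (extFun σv) k S) u v := by
    intro k
    induction k with
    | zero => exact base
    | succ k ih => exact zop_readBefore_congr ih (extFun σv k)
  exact desSet_congr (main r) τ

end

end RomeroComaj
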